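/- arXiv:2010.06793 — 7 statements merged into one kernel-verified Lean document; each statement's English description precedes it below -/
import Mathlib

section
/- Let H be a complex Hilbert space, let U_1, …, U_J be closed subspaces of H, let P_i : H → H denote the orthogonal projection onto U_i, and set P = Σ_{i=1}^J P_i. Assume: (strengthened Cauchy–Schwarz) there exists β > 0 such that for every choice of u_i ∈ U_i and v_j ∈ U_j, Σ_{i=1}^J Σ_{j=1}^J |⟪u_i, v_j⟫| ≤ β (Σ_{i=1}^J ‖u_i‖²)^{1/2} (Σ_{j=1}^J ‖v_j‖²)^{1/2}; and (stable decomposition) there exists α > 0 such that every u ∈ H admits a decomposition u = Σ_{i=1}^J u_i with u_i ∈ U_i and Σ_{i=1}^J ‖u_i‖² ≤ α^{-1} ‖u‖². Then for every u ∈ H, α ‖u‖² ≤ Re⟪P u, u⟫ ≤ β ‖u‖². -/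
/-- Subspace correction theorem (Xu): under the strengthened Cauchy–Schwarz
inequality and the stable decomposition assumption, the sum of orthogonal
projections `P = ∑ i, P i` onto the closed subspaces `U i` satisfies
`α ‖u‖² ≤ Re⟪P u, u⟫ ≤ β ‖u‖²`. -/
theorem stmt_0
    {H : Type*} [NormedAddCommGroup H] [InnerProductSpace ℂ H] [CompleteSpace H]
    (J : ℕ) (U : Fin J → Submodule ℂ H) (hU : ∀ i, IsClosed ((U i : Set H)))
    (P : Fin J → (H →L[ℂ] H))
    (hPmem : ∀ i (u : H), P i u ∈ U i)
    (hPproj : ∀ i (u : H), ∀ v ∈ U i, (inner ℂ (P i u) v : ℂ) = inner ℂ u v)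
    (α β : ℝ) (hα : 0 < α) (hβ : 0 < β)
    (hCS : ∀ u v : Fin J → H, (∀ i, u i ∈ U i) → (∀ j, v j ∈ U j) →
      ∑ i, ∑ j, ‖(inner ℂ (u i) (v j) : ℂ)‖ ≤
        β * Real.sqrt (∑ i, ‖u i‖ ^ 2) * Real.sqrt (∑ j, ‖v j‖ ^ 2))
    (hSD : ∀ u : H, ∃ w : Fin J → H, (∀ i, w i ∈ U i) ∧ u = ∑ i, w i ∧
      ∑ i, ‖w i‖ ^ 2 ≤ α⁻¹ * ‖u‖ ^ 2) :
    ∀ u : H, α * ‖u‖ ^ 2 ≤ (inner ℂ ((∑ i, P i) u) u : ℂ).re ∧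
      (inner ℂ ((∑ i, P i) u) u : ℂ).re ≤ β * ‖u‖ ^ 2 := by
  intro u
  have hPu : ((∑ i, P i) u) = ∑ i, P i u := by simp
  set S : ℝ := ∑ i, ‖P i u‖ ^ 2 with hS
  have hS0 : 0 ≤ S := Finset.sum_nonneg fun i _ => sq_nonneg _
  -- each term ⟪P i u, u⟫ is real, equal to ‖P i u‖²
  have hterm : ∀ i, (inner ℂ (P i u) u : ℂ).re = ‖P i u‖ ^ 2 := by
    intro i
    have h1 : (inner ℂ (P i u) (P i u) : ℂ) = inner ℂ u (P i u) :=
      hPproj i u _ (hPmem i u)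
    have h2 : (inner ℂ (P i u) u : ℂ) = (starRingEnd ℂ) (inner ℂ u (P i u)) :=
      (inner_conj_symm _ _).symm
    rw [h2, ← h1, Complex.conj_re]
    exact inner_self_eq_norm_sq (𝕜 := ℂ) (P i u)
  have hkey : (inner ℂ ((∑ i, P i) u) u : ℂ).re = S := by
    rw [hPu, sum_inner, Complex.re_sum]
    exact Finset.sum_congr rfl fun i _ => hterm i
  have reLe : ∀ z : ℂ, z.re ≤ ‖z‖ := fun z => by
    exact Complex.re_le_norm z
  rw [hkey]
  constructor
  · -- lower bound
    obtain ⟨w, hw, hdu, hwb⟩ := hSD u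
    have h1 : ‖u‖ ^ 2 = (∑ i, (inner ℂ (P i u) (w i) : ℂ)).re := by
      have : (inner ℂ u u : ℂ) = ∑ i, inner ℂ (P i u) (w i) := by
        calc (inner ℂ u u : ℂ) = inner ℂ u (∑ i, w i) := by rw [← hdu]
          _ = ∑ i, inner ℂ u (w i) := inner_sum _ _ _
          _ = ∑ i, inner ℂ (P i u) (w i) :=
              Finset.sum_congr rfl fun i _ => (hPproj i u _ (hw i)).symm
      rw [← this]
      exact (inner_self_eq_norm_sq (𝕜 := ℂ) u).symm
    have h2 : (∑ i, (inner ℂ (P i u) (w i) : ℂ)).re ≤ ∑ i, ‖P i u‖ * ‖w i‖ := by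
      rw [Complex.re_sum]
      refine Finset.sum_le_sum fun i _ => ?_
      exact (reLe _).trans (norm_inner_le_norm _ _)
    have h3 : ∑ i, ‖P i u‖ * ‖w i‖ ≤
        Real.sqrt (∑ i, ‖P i u‖ ^ 2) * Real.sqrt (∑ i, ‖w i‖ ^ 2) :=
      Real.sum_mul_le_sqrt_mul_sqrt _ _ _
    have h4 : Real.sqrt (∑ i, ‖w i‖ ^ 2) ≤ Real.sqrt (α⁻¹ * ‖u‖ ^ 2) :=
      Real.sqrt_le_sqrt hwb
    have h5 : ‖u‖ ^ 2 ≤ Real.sqrt S * Real.sqrt (α⁻¹ * ‖u‖ ^ 2) := by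
      calc ‖u‖ ^ 2 = (∑ i, (inner ℂ (P i u) (w i) : ℂ)).re := h1
        _ ≤ ∑ i, ‖P i u‖ * ‖w i‖ := h2
        _ ≤ Real.sqrt S * Real.sqrt (∑ i, ‖w i‖ ^ 2) := h3
        _ ≤ Real.sqrt S * Real.sqrt (α⁻¹ * ‖u‖ ^ 2) := by
            exact mul_le_mul_of_nonneg_left h4 (Real.sqrt_nonneg _)
    have hsq : (‖u‖ ^ 2) ^ 2 ≤ S * (α⁻¹ * ‖u‖ ^ 2) := by
      have := mul_le_mul h5 h5 (sq_nonneg _) (by positivity)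
      calc (‖u‖ ^ 2) ^ 2 = ‖u‖ ^ 2 * ‖u‖ ^ 2 := by ring
        _ ≤ (Real.sqrt S * Real.sqrt (α⁻¹ * ‖u‖ ^ 2)) *
            (Real.sqrt S * Real.sqrt (α⁻¹ * ‖u‖ ^ 2)) := this
        _ = (Real.sqrt S * Real.sqrt S) * (Real.sqrt (α⁻¹ * ‖u‖ ^ 2) *
            Real.sqrt (α⁻¹ * ‖u‖ ^ 2)) := by ring
        _ = S * (α⁻¹ * ‖u‖ ^ 2) := by
            rw [Real.mul_self_sqrt hS0, Real.mul_self_sqrt (by positivity)]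
    rcases eq_or_lt_of_le (norm_nonneg u) with h0 | h0
    · simp [← h0, hS0]
    · have hu2 : (0:ℝ) < ‖u‖ ^ 2 := by positivity
      rw [show (‖u‖^2)^2 = ‖u‖^2 * ‖u‖^2 by ring] at hsq
      have : ‖u‖ ^ 2 ≤ S * α⁻¹ := by
        have := (mul_le_mul_iff_of_pos_right hu2).mp (by linarith [hsq] : ‖u‖^2 * ‖u‖^2 ≤ (S * α⁻¹) * ‖u‖^2)
        exact this
      calc α * ‖u‖ ^ 2 ≤ α * (S * α⁻¹) := by
            exact mul_le_mul_of_nonneg_left this hα.le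
        _ = S := by field_simp
  · -- upper bound
    have hnormPu : ‖(∑ i, P i u)‖ ^ 2 ≤ β * S := by
      have h1 : ‖(∑ i, P i u)‖ ^ 2 = (inner ℂ (∑ i, P i u) (∑ i, P i u) : ℂ).re :=
        (inner_self_eq_norm_sq (𝕜 := ℂ) _).symm
      have h2 : (inner ℂ (∑ i, P i u) (∑ i, P i u) : ℂ).re ≤
          ∑ i, ∑ j, ‖(inner ℂ (P i u) (P j u) : ℂ)‖ := by
        rw [sum_inner, Complex.re_sum]
        refine Finset.sum_le_sum fun i _ => ?_
        rw [inner_sum, Complex.re_sum]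
        refine Finset.sum_le_sum fun j _ => ?_
        exact reLe _
      have h3 := hCS (fun i => P i u) (fun i => P i u)
        (fun i => hPmem i u) (fun i => hPmem i u)
      rw [h1]
      calc (inner ℂ (∑ i, P i u) (∑ i, P i u) : ℂ).re
          ≤ ∑ i, ∑ j, ‖(inner ℂ (P i u) (P j u) : ℂ)‖ := h2
        _ ≤ β * Real.sqrt S * Real.sqrt S := h3
        _ = β * S := by rw [mul_assoc, Real.mul_self_sqrt hS0]
    have hSb : S ≤ ‖(∑ i, P i u)‖ * ‖u‖ := by
      calc S = (inner ℂ ((∑ i, P i) u) u : ℂ).re := hkey.symm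
        _ ≤ ‖(inner ℂ ((∑ i, P i) u) u : ℂ)‖ := reLe _
        _ ≤ ‖(∑ i, P i) u‖ * ‖u‖ := norm_inner_le_norm _ _
        _ = ‖(∑ i, P i u)‖ * ‖u‖ := by rw [hPu]
    have hsq : S * S ≤ β * S * ‖u‖ ^ 2 := by
      calc S * S ≤ (‖(∑ i, P i u)‖ * ‖u‖) * (‖(∑ i, P i u)‖ * ‖u‖) :=
            mul_le_mul hSb hSb hS0 (by positivity)
        _ = ‖(∑ i, P i u)‖ ^ 2 * ‖u‖ ^ 2 := by ring
        _ ≤ (β * S) * ‖u‖ ^ 2 :=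
            mul_le_mul_of_nonneg_right hnormPu (sq_nonneg _)
    rcases eq_or_lt_of_le hS0 with h0 | h0
    · rw [← h0]; positivity
    · have : S * S ≤ (β * ‖u‖ ^ 2) * S := by linarith [hsq]
      exact le_of_mul_le_mul_right (by linarith) h0
end

section
/- Let H be a complex Hilbert space, let U_1, …, U_J be closed subspaces of H, let P_i : H → H denote the orthogonal projection onto U_i, and set P = Σ_{i=1}^J P_i. If there exists β > 0 such that for every choice of u_i ∈ U_i and v_j ∈ U_j one has Σ_{i=1}^J Σ_{j=1}^J |⟪u_i, v_j⟫| ≤ β (Σ_{i=1}^J ‖u_i‖²)^{1/2} (Σ_{j=1}^J ‖v_j‖²)^{1/2}, then Re⟪P u, u⟫ ≤ β ‖u‖² for every u ∈ H. -/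
/-- Upper-bound half of the subspace correction theorem: the strengthened
Cauchy–Schwarz inequality implies `Re⟪P u, u⟫ ≤ β ‖u‖²` for
`P = ∑ i, P i` the sum of orthogonal projections onto closed subspaces. -/
theorem stmt_1
    {H : Type*} [NormedAddCommGroup H] [InnerProductSpace ℂ H] [CompleteSpace H]
    (J : ℕ) (U : Fin J → Submodule ℂ H) (hU : ∀ i, IsClosed ((U i : Set H)))
    (P : Fin J → (H →L[ℂ] H))
    (hPmem : ∀ i (u : H), P i u ∈ U i)
    (hPproj : ∀ i (u : H), ∀ v ∈ U i, (inner ℂ (P i u) v : ℂ) = inner ℂ u v)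
    (β : ℝ) (hβ : 0 < β)
    (hCS : ∀ u v : Fin J → H, (∀ i, u i ∈ U i) → (∀ j, v j ∈ U j) →
      ∑ i, ∑ j, ‖(inner ℂ (u i) (v j) : ℂ)‖ ≤
        β * Real.sqrt (∑ i, ‖u i‖ ^ 2) * Real.sqrt (∑ j, ‖v j‖ ^ 2)) :
    ∀ u : H, (inner ℂ ((∑ i, P i) u) u : ℂ).re ≤ β * ‖u‖ ^ 2 := by
  intro u
  set S : ℝ := ∑ i, ‖P i u‖ ^ 2 with hS
  have hS0 : 0 ≤ S := Finset.sum_nonneg fun i _ => by positivity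
  -- inner ℂ (u, P i u) = ‖P i u‖²
  have key : ∀ i, (inner ℂ u (P i u) : ℂ) = (‖P i u‖ : ℂ) ^ 2 := by
    intro i
    have := hPproj i u (P i u) (hPmem i u)
    rw [← this, inner_self_eq_norm_sq_to_K]
    norm_cast
  have key2 : ∀ i, (inner ℂ ((P i) u) u : ℂ).re = ‖P i u‖ ^ 2 := by
    intro i
    have : (inner ℂ ((P i) u) u : ℂ) = starRingEnd ℂ (inner ℂ u (P i u)) :=
      (inner_conj_symm _ _).symm
    rw [this, key i]
    simp [← Complex.ofReal_pow]
  -- LHS equals S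
  have hLHS : (inner ℂ ((∑ i, P i) u) u : ℂ).re = S := by
    have : ((∑ i, P i) u : H) = ∑ i, P i u := by
      simp [ContinuousLinearMap.sum_apply]
    rw [this, sum_inner, Complex.re_sum]
    exact Finset.sum_congr rfl fun i _ => key2 i
  rw [hLHS]
  set w : H := ∑ i, P i u with hw
  -- ‖w‖² ≤ β * S
  have hCSapp := hCS (fun i => P i u) (fun i => P i u)
    (fun i => hPmem i u) (fun i => hPmem i u)
  have hnormw : ‖w‖ ^ 2 ≤ β * S := by
    have h1 : ‖w‖ ^ 2 = (inner ℂ w w : ℂ).re := by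
      rw [← inner_self_eq_norm_sq (𝕜 := ℂ)]; rfl
    have h2 : (inner ℂ w w : ℂ).re = ∑ i, ∑ j, (inner ℂ (P i u) (P j u) : ℂ).re := by
      rw [hw, sum_inner, Complex.re_sum]
      refine Finset.sum_congr rfl fun i _ => ?_
      rw [inner_sum, Complex.re_sum]
    have h4 : β * Real.sqrt S * Real.sqrt S = β * S := by
      rw [mul_assoc, Real.mul_self_sqrt hS0]
    rw [h1, h2]
    calc ∑ i, ∑ j, (inner ℂ (P i u) (P j u) : ℂ).re
        ≤ ∑ i, ∑ j, ‖(inner ℂ (P i u) (P j u) : ℂ)‖ :=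
          Finset.sum_le_sum fun i _ => Finset.sum_le_sum fun j _ =>
            (Complex.abs_re_le_norm _).trans' (le_abs_self _)
      _ ≤ β * Real.sqrt S * Real.sqrt S := hCSapp
      _ = β * S := h4
  -- S = Re inner ℂ u w ≤ ‖u‖ * ‖w‖
  have hSle : S ≤ ‖u‖ * ‖w‖ := by
    have : (inner ℂ u w : ℂ).re = S := by
      rw [hw, inner_sum, Complex.re_sum]
      refine Finset.sum_congr rfl fun i _ => ?_
      rw [key i]; simp [← Complex.ofReal_pow]
    calc S = (inner ℂ u w : ℂ).re := this.symm
      _ ≤ ‖(inner ℂ u w : ℂ)‖ := Complex.abs_re_le_norm _ |>.trans' (le_abs_self _)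
      _ ≤ ‖u‖ * ‖w‖ := norm_inner_le_norm _ _
  -- conclude
  rcases eq_or_lt_of_le hS0 with h0 | h0
  · rw [← h0]; positivity
  · have hsq : S ^ 2 ≤ β * S * ‖u‖ ^ 2 := by
      calc S ^ 2 ≤ (‖u‖ * ‖w‖) ^ 2 := by
            apply pow_le_pow_left₀ hS0 hSle
        _ = ‖w‖ ^ 2 * ‖u‖ ^ 2 := by ring
        _ ≤ β * S * ‖u‖ ^ 2 := by
            apply mul_le_mul_of_nonneg_right hnormw (by positivity)
    nlinarith
end

section
/- Let H be a complex Hilbert space, let U_1, …, U_J be closed subspaces of H, let P_i : H → H denote the orthogonal projection onto U_i, and set P = Σ_{i=1}^J P_i. If there exists α > 0 such that every u ∈ H admits a decomposition u = Σ_{i=1}^J u_i with u_i ∈ U_i and Σ_{i=1}^J ‖u_i‖² ≤ α^{-1} ‖u‖², then α ‖u‖² ≤ Re⟪P u, u⟫ for every u ∈ H. -/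
/-- Lower-bound half of the subspace correction theorem (Lions' lemma): the
stable decomposition assumption implies `α ‖u‖² ≤ Re⟪P u, u⟫` for
`P = ∑ i, P i` the sum of orthogonal projections onto closed subspaces. -/
theorem stmt_2
    {H : Type*} [NormedAddCommGroup H] [InnerProductSpace ℂ H] [CompleteSpace H]
    (J : ℕ) (U : Fin J → Submodule ℂ H) (hU : ∀ i, IsClosed ((U i : Set H)))
    (P : Fin J → (H →L[ℂ] H))
    (hPmem : ∀ i (u : H), P i u ∈ U i)
    (hPproj : ∀ i (u : H), ∀ v ∈ U i, (inner ℂ (P i u) v : ℂ) = inner ℂ u v)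
    (α : ℝ) (hα : 0 < α)
    (hSD : ∀ u : H, ∃ w : Fin J → H, (∀ i, w i ∈ U i) ∧ u = ∑ i, w i ∧
      ∑ i, ‖w i‖ ^ 2 ≤ α⁻¹ * ‖u‖ ^ 2) :
    ∀ u : H, α * ‖u‖ ^ 2 ≤ (inner ℂ ((∑ i, P i) u) u : ℂ).re := by
  intro u
  obtain ⟨w, hw, hu, hT⟩ := hSD u
  -- Re⟪Pu,u⟫ = ∑ ‖Pᵢu‖²
  have hS : (inner ℂ ((∑ i, P i) u) u : ℂ).re = ∑ i, ‖P i u‖ ^ 2 := by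
    rw [ContinuousLinearMap.sum_apply, sum_inner, Complex.re_sum]
    refine Finset.sum_congr rfl fun i _ => ?_
    have h1 : (inner ℂ (P i u) (P i u) : ℂ) = inner ℂ u (P i u) :=
      hPproj i u (P i u) (hPmem i u)
    have h2 : (inner ℂ (P i u) u : ℂ) = starRingEnd ℂ (inner ℂ u (P i u)) :=
      (inner_conj_symm _ _).symm
    rw [h2, Complex.conj_re, ← h1]
    exact inner_self_eq_norm_sq (𝕜 := ℂ) (P i u)
  rw [hS]
  -- ‖u‖² ≤ ∑ ‖Pᵢu‖ ‖wᵢ‖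
  have hA : ‖u‖ ^ 2 ≤ ∑ i, ‖P i u‖ * ‖w i‖ := by
    have h3 : (inner ℂ u u : ℂ).re = (‖u‖ : ℝ) ^ 2 := inner_self_eq_norm_sq (𝕜 := ℂ) u
    rw [← h3]
    nth_rewrite 2 [hu]
    rw [inner_sum, Complex.re_sum]
    refine Finset.sum_le_sum fun i _ => ?_
    rw [← hPproj i u (w i) (hw i)]
    calc (inner ℂ (P i u) (w i) : ℂ).re ≤ ‖(inner ℂ (P i u) (w i) : ℂ)‖ :=
          Complex.re_le_norm _
      _ ≤ ‖P i u‖ * ‖w i‖ := norm_inner_le_norm _ _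
  -- Cauchy–Schwarz
  have hCS : (∑ i, ‖P i u‖ * ‖w i‖) ^ 2 ≤
      (∑ i, ‖P i u‖ ^ 2) * ∑ i, ‖w i‖ ^ 2 :=
    Finset.sum_mul_sq_le_sq_mul_sq _ _ _
  have hSnn : (0:ℝ) ≤ ∑ i, ‖P i u‖ ^ 2 :=
    Finset.sum_nonneg fun i _ => sq_nonneg _
  have hApos : (0:ℝ) ≤ ∑ i, ‖P i u‖ * ‖w i‖ :=
    le_trans (sq_nonneg _) hA
  rcases eq_or_lt_of_le (norm_nonneg u) with h0 | h0
  · simp [← h0]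
    positivity
  · have h4 : (‖u‖ ^ 2) ^ 2 ≤ (∑ i, ‖P i u‖ ^ 2) * (α⁻¹ * ‖u‖ ^ 2) := by
      calc (‖u‖ ^ 2) ^ 2 ≤ (∑ i, ‖P i u‖ * ‖w i‖) ^ 2 := by
            apply pow_le_pow_left₀ (sq_nonneg _) hA
        _ ≤ (∑ i, ‖P i u‖ ^ 2) * ∑ i, ‖w i‖ ^ 2 := hCS
        _ ≤ (∑ i, ‖P i u‖ ^ 2) * (α⁻¹ * ‖u‖ ^ 2) :=
            mul_le_mul_of_nonneg_left hT hSnn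
    have hu2 : (0:ℝ) < ‖u‖ ^ 2 := by positivity
    have hαinv : (0:ℝ) < α⁻¹ := inv_pos.mpr hα
    have key : α * ‖u‖ ^ 2 * ‖u‖ ^ 2 ≤ (∑ i, ‖P i u‖ ^ 2) * ‖u‖ ^ 2 := by
      calc α * ‖u‖ ^ 2 * ‖u‖ ^ 2 = α * (‖u‖ ^ 2) ^ 2 := by ring
        _ ≤ α * ((∑ i, ‖P i u‖ ^ 2) * (α⁻¹ * ‖u‖ ^ 2)) :=
            mul_le_mul_of_nonneg_left h4 hα.le
        _ = (α * α⁻¹) * ((∑ i, ‖P i u‖ ^ 2) * ‖u‖ ^ 2) := by ring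
        _ = (∑ i, ‖P i u‖ ^ 2) * ‖u‖ ^ 2 := by
            rw [mul_inv_cancel₀ hα.ne', one_mul]
    exact le_of_mul_le_mul_right key hu2
end

section
/- Let H be a complex inner product space, let U_1, …, U_J be subspaces of H, and suppose there is a symmetric relation ~ on {1, …, J} such that: (a) whenever i is not related to j, one has ⟪u_i, v_j⟫ = 0 for all u_i ∈ U_i and v_j ∈ U_j; and (b) for each i, the set { j : i ~ j } has cardinality at most r. Then for every choice of u_i ∈ U_i and v_j ∈ U_j, Σ_{i=1}^J Σ_{j=1}^J |⟪u_i, v_j⟫| ≤ r (Σ_{i=1}^J ‖u_i‖²)^{1/2} (Σ_{j=1}^J ‖v_j‖²)^{1/2}. -/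
/-- Strengthened Cauchy–Schwarz inequality for subspaces with a finite-overlap
orthogonality structure: if subspaces associated to non-related indices are
mutually orthogonal and each index is related to at most `r` indices, then
`∑ᵢ∑ⱼ |⟪u i, v j⟫| ≤ r (∑ᵢ‖u i‖²)^{1/2} (∑ⱼ‖v j‖²)^{1/2}`. -/
theorem stmt_6
    {H : Type*} [NormedAddCommGroup H] [InnerProductSpace ℂ H]
    (J r : ℕ) (U : Fin J → Submodule ℂ H)
    (rel : Fin J → Fin J → Prop) (hsymm : ∀ i j, rel i j → rel j i)
    (horth : ∀ i j, ¬ rel i j → ∀ ui ∈ U i, ∀ vj ∈ U j, (inner ℂ ui vj : ℂ) = 0)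
    (hcard : ∀ i, ({j | rel i j} : Set (Fin J)).ncard ≤ r) :
    ∀ u v : Fin J → H, (∀ i, u i ∈ U i) → (∀ j, v j ∈ U j) →
      ∑ i, ∑ j, ‖(inner ℂ (u i) (v j) : ℂ)‖ ≤
        (r : ℝ) * Real.sqrt (∑ i, ‖u i‖ ^ 2) * Real.sqrt (∑ j, ‖v j‖ ^ 2) := by
  classical
  intro u v hu hv
  set A : ℝ := ∑ i, ‖u i‖ ^ 2 with hA
  set B : ℝ := ∑ j, ‖v j‖ ^ 2 with hB
  have hAnn : 0 ≤ A := Finset.sum_nonneg fun i _ => sq_nonneg _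
  have hBnn : 0 ≤ B := Finset.sum_nonneg fun i _ => sq_nonneg _
  set S : Finset (Fin J × Fin J) := Finset.univ.filter (fun p => rel p.1 p.2) with hS
  -- cardinality bound on each row
  have hrow : ∀ i : Fin J, ((Finset.univ.filter (fun j => rel i j)).card : ℝ) ≤ (r : ℝ) := by
    intro i
    have h := hcard i
    rw [Set.ncard_eq_toFinset_card'] at h
    have : ({j | rel i j} : Set (Fin J)).toFinset = Finset.univ.filter (fun j => rel i j) := by
      ext j; simp
    rw [this] at h
    exact_mod_cast h
  have hcol : ∀ j : Fin J, ((Finset.univ.filter (fun i => rel i j)).card : ℝ) ≤ (r : ℝ) := by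
    intro j
    have heq : Finset.univ.filter (fun i => rel i j) = Finset.univ.filter (fun i => rel j i) := by
      ext i; simp only [Finset.mem_filter, Finset.mem_univ, true_and]
      exact ⟨hsymm i j, hsymm j i⟩
    rw [heq]; exact hrow j
  -- step 1: reduce the double sum to a sum over S
  have hstep1 : ∑ i, ∑ j, ‖(inner ℂ (u i) (v j) : ℂ)‖
      = ∑ p ∈ S, ‖(inner ℂ (u p.1) (v p.2) : ℂ)‖ := by
    rw [← Finset.sum_product', hS, Finset.sum_filter]
    rw [← Finset.univ_product_univ]
    refine Finset.sum_congr rfl fun p _ => ?_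
    by_cases hp : rel p.1 p.2
    · simp [hp]
    · simp [hp, horth p.1 p.2 hp (u p.1) (hu p.1) (v p.2) (hv p.2)]
  -- step 2: bound each inner product by product of norms
  have hstep2 : ∑ p ∈ S, ‖(inner ℂ (u p.1) (v p.2) : ℂ)‖
      ≤ ∑ p ∈ S, ‖u p.1‖ * ‖v p.2‖ :=
    Finset.sum_le_sum fun p _ => norm_inner_le_norm _ _
  -- sums of squares over S
  have hSA : ∑ p ∈ S, ‖u p.1‖ ^ 2 ≤ (r : ℝ) * A := by
    rw [hS, Finset.sum_filter, ← Finset.univ_product_univ, Finset.sum_product]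
    have : ∀ i : Fin J, (∑ j, if rel i j then ‖u i‖ ^ 2 else 0)
        = ((Finset.univ.filter (fun j => rel i j)).card : ℝ) * ‖u i‖ ^ 2 := by
      intro i
      rw [← Finset.sum_filter, Finset.sum_const, nsmul_eq_mul]
    rw [Finset.sum_congr rfl fun i _ => this i, hA, Finset.mul_sum]
    exact Finset.sum_le_sum fun i _ =>
      mul_le_mul_of_nonneg_right (hrow i) (sq_nonneg _)
  have hSB : ∑ p ∈ S, ‖v p.2‖ ^ 2 ≤ (r : ℝ) * B := by
    rw [hS, Finset.sum_filter, ← Finset.univ_product_univ, Finset.sum_product_right]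
    have : ∀ j : Fin J, (∑ i, if rel i j then ‖v j‖ ^ 2 else 0)
        = ((Finset.univ.filter (fun i => rel i j)).card : ℝ) * ‖v j‖ ^ 2 := by
      intro j
      rw [← Finset.sum_filter, Finset.sum_const, nsmul_eq_mul]
    rw [Finset.sum_congr rfl fun j _ => this j, hB, Finset.mul_sum]
    exact Finset.sum_le_sum fun j _ =>
      mul_le_mul_of_nonneg_right (hcol j) (sq_nonneg _)
  -- Cauchy–Schwarz over S
  set T : ℝ := ∑ p ∈ S, ‖u p.1‖ * ‖v p.2‖ with hT
  have hTnn : 0 ≤ T := Finset.sum_nonneg fun p _ =>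
    mul_nonneg (norm_nonneg _) (norm_nonneg _)
  have hCS : T ^ 2 ≤ (∑ p ∈ S, ‖u p.1‖ ^ 2) * (∑ p ∈ S, ‖v p.2‖ ^ 2) :=
    Finset.sum_mul_sq_le_sq_mul_sq S (fun p => ‖u p.1‖) (fun p => ‖v p.2‖)
  have hT2 : T ^ 2 ≤ ((r : ℝ) * Real.sqrt A * Real.sqrt B) ^ 2 := by
    have h1 : T ^ 2 ≤ ((r : ℝ) * A) * ((r : ℝ) * B) := by
      refine hCS.trans (mul_le_mul hSA hSB ?_ ?_)
      · exact Finset.sum_nonneg fun p _ => sq_nonneg _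
      · positivity
    calc T ^ 2 ≤ ((r : ℝ) * A) * ((r : ℝ) * B) := h1
      _ = ((r : ℝ) * Real.sqrt A * Real.sqrt B) ^ 2 := by
          rw [mul_pow, mul_pow, Real.sq_sqrt hAnn, Real.sq_sqrt hBnn]; ring
  have hfin : T ≤ (r : ℝ) * Real.sqrt A * Real.sqrt B := by
    have := Real.sqrt_le_sqrt hT2
    rwa [Real.sqrt_sq hTnn, Real.sqrt_sq (by positivity)] at this
  calc ∑ i, ∑ j, ‖(inner ℂ (u i) (v j) : ℂ)‖
      = ∑ p ∈ S, ‖(inner ℂ (u p.1) (v p.2) : ℂ)‖ := hstep1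
    _ ≤ T := hstep2
    _ ≤ (r : ℝ) * Real.sqrt A * Real.sqrt B := hfin
end

section
/- Let (Ω, μ) be a measure space, let J be a positive integer, and let Φ_1, …, Φ_J : Ω → ℝ be measurable functions with 0 ≤ Φ_j ≤ 1 pointwise and Σ_{j=1}^J Φ_j(x) = 1 for μ-a.e. x. Let Ω_1, …, Ω_J ⊆ Ω be measurable sets such that Φ_j vanishes a.e. outside Ω_j, and suppose there is a positive integer r with Σ_{j=1}^J χ_{Ω_j}(x) ≤ r for μ-a.e. x (finite overlap). Let S be a closed subspace of L²(μ), let P : L²(μ) → L²(μ) be the orthogonal projection onto S, and let u ∈ S. Define u_j := P(Φ_j · u). Then Σ_{j=1}^J u_j = u and Σ_{j=1}^J ‖u_j‖²_{L²(μ)} ≤ r ‖u‖²_{L²(μ)}. -/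
open MeasureTheory

lemma lp_coeFn_sum {Ω : Type*} [MeasurableSpace Ω] {μ : Measure Ω}
    {ι : Type*} (s : Finset ι) (f : ι → Lp ℂ 2 μ) :
    ((∑ j ∈ s, f j : Lp ℂ 2 μ) : Ω → ℂ) =ᵐ[μ] fun x => ∑ j ∈ s, f j x := by
  classical
  induction s using Finset.induction_on with
  | empty => simp only [Finset.sum_empty]; exact Lp.coeFn_zero ℂ 2 μ
  | insert a s' hj ih =>
    rw [Finset.sum_insert hj]
    filter_upwards [Lp.coeFn_add (f a) (∑ j ∈ s', f j), ih] with x h1 h2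
    rw [h1, Pi.add_apply, h2, Finset.sum_insert hj]

lemma lp_norm_sq_eq_integral {Ω : Type*} [MeasurableSpace Ω] {μ : Measure Ω}
    (f : Lp ℂ 2 μ) : ‖f‖ ^ 2 = ∫ x, ‖f x‖ ^ 2 ∂μ := by
  have h1 : ‖f‖ ^ 2 = RCLike.re (inner ℂ f f : ℂ) :=
    norm_sq_eq_re_inner (𝕜 := ℂ) f
  rw [h1, L2.inner_def, ← integral_re (L2.integrable_inner f f)]
  congr 1
  ext x
  simp [inner_self_eq_norm_sq (𝕜 := ℂ) (f x), Complex.sq_norm, Complex.normSq_apply, ← Complex.ofReal_pow, Complex.ofReal_re]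

/-- Stable decomposition for the `L²` field variables: given a measurable
partition of unity `Φ j` subordinate to sets `Ω j` with finite overlap `r`,
a closed subspace `S` of `L²(μ)` with orthogonal projection `P`, and `u ∈ S`,
the pieces `u_j := P (Φ_j · u)` satisfy `∑ j, u_j = u` and
`∑ j, ‖u_j‖² ≤ r ‖u‖²`. -/
theorem stmt_7
    {Ω : Type*} [MeasurableSpace Ω] (μ : Measure Ω)
    (J : ℕ) (hJ : 0 < J)
    (Φ : Fin J → Ω → ℝ) (hmeas : ∀ j, Measurable (Φ j))
    (h0 : ∀ j x, 0 ≤ Φ j x) (h1 : ∀ j x, Φ j x ≤ 1)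
    (hsum : ∀ᵐ x ∂μ, ∑ j, Φ j x = 1)
    (Ωs : Fin J → Set Ω) (hΩmeas : ∀ j, MeasurableSet (Ωs j))
    (hsupp : ∀ j, ∀ᵐ x ∂μ, x ∉ Ωs j → Φ j x = 0)
    (r : ℕ) (hr : 0 < r)
    (hoverlap : ∀ᵐ x ∂μ, ∑ j, (Ωs j).indicator (fun _ => (1 : ℝ)) x ≤ (r : ℝ))
    (S : Submodule ℂ (Lp ℂ 2 μ)) (hS : IsClosed ((S : Set (Lp ℂ 2 μ))))
    (P : Lp ℂ 2 μ →L[ℂ] Lp ℂ 2 μ)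
    (hPmem : ∀ f, P f ∈ S)
    (hPproj : ∀ f, ∀ g ∈ S, (inner ℂ (P f) g : ℂ) = inner ℂ f g)
    (u : Lp ℂ 2 μ) (hu : u ∈ S)
    (w : Fin J → Lp ℂ 2 μ)
    (hw : ∀ j, (w j : Ω → ℂ) =ᵐ[μ] fun x => (Φ j x : ℂ) * u x) :
    (∑ j, P (w j)) = u ∧ ∑ j, ‖P (w j)‖ ^ 2 ≤ (r : ℝ) * ‖u‖ ^ 2 := by
  -- P fixes elements of S
  have hPfix : ∀ v ∈ S, P v = v := by
    intro v hv
    have hmem : P v - v ∈ S := S.sub_mem (hPmem v) hv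
    have h1 : (inner ℂ (P v - v) (P v - v) : ℂ) = 0 := by
      rw [inner_sub_left, hPproj v _ hmem, sub_self]
    rwa [inner_self_eq_zero, sub_eq_zero] at h1
  -- ∑ w j = u in Lp
  have hwsum : (∑ j, w j) = u := by
    apply Lp.ext
    filter_upwards [lp_coeFn_sum Finset.univ w, ae_all_iff.2 hw, hsum] with x hx hx2 hx3
    rw [hx]
    simp only [hx2]
    · calc ∑ j, (Φ j x : ℂ) * u x = (∑ j, (Φ j x : ℂ)) * u x := by
            rw [Finset.sum_mul]
          _ = u x := by
            have : (∑ j, (Φ j x : ℂ)) = 1 := by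
              rw [← Complex.ofReal_sum, hx3, Complex.ofReal_one]
            rw [this, one_mul]
  have part1 : (∑ j, P (w j)) = u := by
    rw [← map_sum, hwsum, hPfix u hu]
  refine ⟨part1, ?_⟩
  -- ‖P f‖ ≤ ‖f‖
  have hPnorm : ∀ f, ‖P f‖ ≤ ‖f‖ := by
    intro f
    have h1 : ‖P f‖ ^ 2 = RCLike.re (inner ℂ (P f) (P f) : ℂ) :=
      norm_sq_eq_re_inner (𝕜 := ℂ) (P f)
    rw [hPproj f _ (hPmem f)] at h1
    have h2 : RCLike.re (inner ℂ f (P f) : ℂ) ≤ ‖f‖ * ‖P f‖ := re_inner_le_norm f (P f)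
    rcases eq_or_lt_of_le (norm_nonneg (P f)) with h | h
    · rw [← h]; exact norm_nonneg f
    · nlinarith [h1, h2]
  have step1 : ∑ j, ‖P (w j)‖ ^ 2 ≤ ∑ j, ‖w j‖ ^ 2 :=
    Finset.sum_le_sum fun j _ => by
      have := hPnorm (w j)
      nlinarith [norm_nonneg (P (w j)), norm_nonneg (w j)]
  refine step1.trans ?_
  -- integrability of pointwise squared norms
  have hint : ∀ f : Lp ℂ 2 μ, Integrable (fun x => ‖f x‖ ^ 2) μ := by
    intro f
    have := (L2.integrable_inner (𝕜 := ℂ) f f).re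
    apply this.congr
    filter_upwards with x
    simp [inner_self_eq_norm_sq (𝕜 := ℂ) (f x), Complex.sq_norm, Complex.normSq_apply, ← Complex.ofReal_pow, Complex.ofReal_re]
  -- rewrite sums as integrals
  have hsum2 : ∑ j, ‖w j‖ ^ 2 = ∫ x, ∑ j, ‖w j x‖ ^ 2 ∂μ := by
    rw [integral_finset_sum _ (fun j _ => hint (w j))]
    exact Finset.sum_congr rfl fun j _ => lp_norm_sq_eq_integral (w j)
  rw [hsum2, lp_norm_sq_eq_integral u, ← integral_const_mul]
  apply integral_mono_ae (integrable_finset_sum _ fun j _ => hint (w j))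
    ((hint u).const_mul _)
  filter_upwards [ae_all_iff.2 hw, ae_all_iff.2 hsupp, hoverlap] with x hx hx2 hx3
  have key : ∀ j : Fin J, ‖w j x‖ ^ 2 ≤ (Ωs j).indicator (fun _ => (1 : ℝ)) x * ‖u x‖ ^ 2 := by
    intro j
    rw [hx j, norm_mul, mul_pow]
    have hφ : ‖(Φ j x : ℂ)‖ ^ 2 ≤ (Ωs j).indicator (fun _ => (1 : ℝ)) x := by
      rw [Complex.norm_real]
      rw [Real.norm_eq_abs, abs_of_nonneg (h0 j x)]
      by_cases hmem : x ∈ Ωs j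
      · simp only [Set.indicator_of_mem hmem]
        nlinarith [h0 j x, h1 j x]
      · simp [Set.indicator_of_notMem hmem, hx2 j hmem]
    exact mul_le_mul_of_nonneg_right hφ (by positivity)
  calc ∑ j, ‖w j x‖ ^ 2 ≤ ∑ j, (Ωs j).indicator (fun _ => (1 : ℝ)) x * ‖u x‖ ^ 2 :=
        Finset.sum_le_sum fun j _ => key j
    _ = (∑ j, (Ωs j).indicator (fun _ => (1 : ℝ)) x) * ‖u x‖ ^ 2 := by rw [Finset.sum_mul]
    _ ≤ (r : ℝ) * ‖u x‖ ^ 2 := mul_le_mul_of_nonneg_right hx3 (by positivity)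
end

section
/- Let Ω ⊆ ℝ^d be an open set, let ω ∈ ℝ, δ > 0, and let Φ : Ω → ℝ be continuously differentiable with 0 ≤ Φ(x) ≤ 1 and |∇Φ(x)| ≤ δ^{-1} for all x ∈ Ω. Let p : Ω → ℂ and u : Ω → ℂ^d be continuously differentiable. Then ∫_Ω ( |iω Φ p + div(Φ u)|² + |iω Φ u + ∇(Φ p)|² ) dx ≤ 2 ∫_Ω ( |iω p + div u|² + |iω u + ∇ p|² ) dx + 2 δ^{-2} ∫_Ω ( |u|² + |p|² ) dx, where the integrals are Lebesgue integrals of nonnegative functions (possibly infinite). -/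
open MeasureTheory

/-- Partial derivative in the `k`-th coordinate direction of a complex-valued
function on `ℝ^d`. -/
noncomputable def pderivC {d : ℕ} (f : (Fin d → ℝ) → ℂ) (k : Fin d)
    (x : Fin d → ℝ) : ℂ :=
  fderiv ℝ f x (Pi.single k 1)

/-- Partial derivative in the `k`-th coordinate direction of a real-valued
function on `ℝ^d`. -/
noncomputable def pderivR {d : ℕ} (f : (Fin d → ℝ) → ℝ) (k : Fin d)
    (x : Fin d → ℝ) : ℝ :=
  fderiv ℝ f x (Pi.single k 1)

/-- Divergence of a complex vector field on `ℝ^d`. -/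
noncomputable def divC {d : ℕ} (u : (Fin d → ℝ) → (Fin d → ℂ))
    (x : Fin d → ℝ) : ℂ :=
  ∑ k, pderivC (fun y => u y k) k x

lemma pderivC_mul {d : ℕ} (Φ : (Fin d → ℝ) → ℝ) (f : (Fin d → ℝ) → ℂ) (k : Fin d)
    (x : Fin d → ℝ) (hΦ : DifferentiableAt ℝ Φ x) (hf : DifferentiableAt ℝ f x) :
    pderivC (fun y => (Φ y : ℂ) * f y) k x
      = (pderivR Φ k x : ℂ) * f x + (Φ x : ℂ) * pderivC f k x := by
  have hΦc : DifferentiableAt ℝ (fun y => ((Φ y : ℝ) : ℂ)) x :=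
    Complex.ofRealCLM.differentiableAt.comp x hΦ
  have hfd : fderiv ℝ (fun y => ((Φ y : ℝ) : ℂ)) x
      = Complex.ofRealCLM.comp (fderiv ℝ Φ x) :=
    (Complex.ofRealCLM.hasFDerivAt.comp x hΦ.hasFDerivAt).fderiv
  unfold pderivC pderivR
  rw [fderiv_fun_mul hΦc hf]
  simp [hfd, smul_eq_mul]
  ring

lemma sq_norm_add_le (a b : ℂ) : ‖a + b‖ ^ 2 ≤ 2 * ‖a‖ ^ 2 + 2 * ‖b‖ ^ 2 := by
  have h := norm_add_le a b
  nlinarith [norm_nonneg a, norm_nonneg b, norm_nonneg (a + b), sq_nonneg (‖a‖ - ‖b‖)]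

/-- Commutator/cutoff estimate for the time-harmonic acoustics operator:
`‖𝒜(Φp, Φu)‖²_{L²(Ω)} ≤ 2 ‖𝒜(p,u)‖²_{L²(Ω)} + 2 δ⁻² ‖(p,u)‖²_{L²(Ω)}`, where
`𝒜(p,u) = (iωp + div u, iωu + ∇p)` and `Φ` is a cutoff with `0 ≤ Φ ≤ 1` and
`|∇Φ| ≤ δ⁻¹` on `Ω`. -/
theorem stmt_8 (d : ℕ) (Ω : Set (Fin d → ℝ)) (hΩ : IsOpen Ω)
    (ω δ : ℝ) (hδ : 0 < δ)
    (Φ : (Fin d → ℝ) → ℝ) (hΦreg : ContDiffOn ℝ 1 Φ Ω)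
    (hΦ0 : ∀ x ∈ Ω, 0 ≤ Φ x) (hΦ1 : ∀ x ∈ Ω, Φ x ≤ 1)
    (hΦgrad : ∀ x ∈ Ω, Real.sqrt (∑ k, (pderivR Φ k x) ^ 2) ≤ δ⁻¹)
    (p : (Fin d → ℝ) → ℂ) (hp : ContDiffOn ℝ 1 p Ω)
    (u : (Fin d → ℝ) → (Fin d → ℂ)) (hu : ∀ k, ContDiffOn ℝ 1 (fun x => u x k) Ω) :
    (∫⁻ x in Ω, ENNReal.ofReal
        (‖Complex.I * (ω : ℂ) * ((Φ x : ℂ) * p x) +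
            divC (fun y k => (Φ y : ℂ) * u y k) x‖ ^ 2 +
          ∑ k, ‖Complex.I * (ω : ℂ) * ((Φ x : ℂ) * u x k) +
            pderivC (fun y => (Φ y : ℂ) * p y) k x‖ ^ 2)) ≤
    2 * (∫⁻ x in Ω, ENNReal.ofReal
        (‖Complex.I * (ω : ℂ) * p x + divC u x‖ ^ 2 +
          ∑ k, ‖Complex.I * (ω : ℂ) * u x k + pderivC p k x‖ ^ 2)) +
    ENNReal.ofReal (2 / δ ^ 2) * (∫⁻ x in Ω, ENNReal.ofReal
        ((∑ k, ‖u x k‖ ^ 2) + ‖p x‖ ^ 2)) := by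
  have hΩm := hΩ.measurableSet
  set μ := (volume : Measure (Fin d → ℝ)).restrict Ω with hμ
  set F : (Fin d → ℝ) → ℝ := fun x =>
    ‖Complex.I * (ω : ℂ) * ((Φ x : ℂ) * p x) +
        divC (fun y k => (Φ y : ℂ) * u y k) x‖ ^ 2 +
      ∑ k, ‖Complex.I * (ω : ℂ) * ((Φ x : ℂ) * u x k) +
        pderivC (fun y => (Φ y : ℂ) * p y) k x‖ ^ 2 with hF
  set G : (Fin d → ℝ) → ℝ := fun x =>
    ‖Complex.I * (ω : ℂ) * p x + divC u x‖ ^ 2 +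
      ∑ k, ‖Complex.I * (ω : ℂ) * u x k + pderivC p k x‖ ^ 2 with hG
  set H : (Fin d → ℝ) → ℝ := fun x =>
    (∑ k, ‖u x k‖ ^ 2) + ‖p x‖ ^ 2 with hH
  -- pointwise estimate
  have key : ∀ x ∈ Ω, F x ≤ 2 * G x + 2 / δ ^ 2 * H x := by
    intro x hx
    have hnx : Ω ∈ nhds x := hΩ.mem_nhds hx
    have hΦx : DifferentiableAt ℝ Φ x :=
      (hΦreg.contDiffAt hnx).differentiableAt one_ne_zero
    have hpx : DifferentiableAt ℝ p x :=
      (hp.contDiffAt hnx).differentiableAt one_ne_zero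
    have hux : ∀ k, DifferentiableAt ℝ (fun y => u y k) x := fun k =>
      ((hu k).contDiffAt hnx).differentiableAt one_ne_zero
    set g : Fin d → ℝ := fun k => pderivR Φ k x with hg
    have hgsum : ∑ k, g k ^ 2 ≤ δ⁻¹ ^ 2 := by
      have h1 := hΦgrad x hx
      have h2 : (0:ℝ) ≤ ∑ k, g k ^ 2 := Finset.sum_nonneg fun k _ => sq_nonneg _
      nlinarith [Real.sq_sqrt h2, Real.sqrt_nonneg (∑ k, g k ^ 2)]
    have hdiv : divC (fun y k => (Φ y : ℂ) * u y k) x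
        = (Φ x : ℂ) * divC u x + ∑ k, (g k : ℂ) * u x k := by
      have : divC (fun y k => (Φ y : ℂ) * u y k) x
          = ∑ k, ((g k : ℂ) * u x k + (Φ x : ℂ) * pderivC (fun y => u y k) k x) :=
        Finset.sum_congr rfl fun k _ => pderivC_mul Φ (fun y => u y k) k x hΦx (hux k)
      rw [this, Finset.sum_add_distrib, ← Finset.mul_sum, divC, add_comm]
    have hgrad : ∀ k, pderivC (fun y => (Φ y : ℂ) * p y) k x
        = (g k : ℂ) * p x + (Φ x : ℂ) * pderivC p k x := fun k =>
      pderivC_mul Φ p k x hΦx hpx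
    set A : ℂ := Complex.I * (ω : ℂ) * p x + divC u x with hA
    set B : Fin d → ℂ := fun k => Complex.I * (ω : ℂ) * u x k + pderivC p k x with hB
    have hΦb : ‖(Φ x : ℂ)‖ ≤ 1 := by
      rw [Complex.norm_real, Real.norm_eq_abs, abs_of_nonneg (hΦ0 x hx)]
      exact hΦ1 x hx
    have hT1 : Complex.I * (ω : ℂ) * ((Φ x : ℂ) * p x) +
        divC (fun y k => (Φ y : ℂ) * u y k) x
        = (Φ x : ℂ) * A + ∑ k, (g k : ℂ) * u x k := by
      rw [hdiv, hA]; ring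
    have hT2 : ∀ k, Complex.I * (ω : ℂ) * ((Φ x : ℂ) * u x k) +
        pderivC (fun y => (Φ y : ℂ) * p y) k x
        = (Φ x : ℂ) * B k + (g k : ℂ) * p x := by
      intro k; rw [hgrad k, hB]; ring
    have hUnn : (0:ℝ) ≤ ∑ k, ‖u x k‖ ^ 2 :=
      Finset.sum_nonneg fun k _ => sq_nonneg _
    -- bound on the sum term
    have hS : ‖∑ k, (g k : ℂ) * u x k‖ ^ 2 ≤ δ⁻¹ ^ 2 * ∑ k, ‖u x k‖ ^ 2 := by
      have h1 : ‖∑ k, (g k : ℂ) * u x k‖ ≤ ∑ k, |g k| * ‖u x k‖ := by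
        refine (norm_sum_le _ _).trans (le_of_eq (Finset.sum_congr rfl fun k _ => ?_))
        rw [norm_mul, Complex.norm_real, Real.norm_eq_abs]
      have h2 : (∑ k, |g k| * ‖u x k‖) ^ 2 ≤ (∑ k, |g k| ^ 2) * ∑ k, ‖u x k‖ ^ 2 :=
        Finset.sum_mul_sq_le_sq_mul_sq _ _ _
      have h3 : ∑ k, |g k| ^ 2 = ∑ k, g k ^ 2 := by simp [sq_abs]
      have hT : (0:ℝ) ≤ ∑ k, |g k| * ‖u x k‖ :=
        Finset.sum_nonneg fun k _ => mul_nonneg (abs_nonneg _) (norm_nonneg _)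
      nlinarith [norm_nonneg (∑ k, (g k : ℂ) * u x k)]
    -- first term bound
    have hΦA : ‖(Φ x : ℂ) * A‖ ≤ ‖A‖ := by
      rw [norm_mul]; exact mul_le_of_le_one_left (norm_nonneg _) hΦb
    have hterm1 : ‖(Φ x : ℂ) * A + ∑ k, (g k : ℂ) * u x k‖ ^ 2
        ≤ 2 * ‖A‖ ^ 2 + 2 * δ⁻¹ ^ 2 * ∑ k, ‖u x k‖ ^ 2 := by
      have := sq_norm_add_le ((Φ x : ℂ) * A) (∑ k, (g k : ℂ) * u x k)
      nlinarith [norm_nonneg ((Φ x : ℂ) * A), norm_nonneg A]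
    -- second term bounds
    have hterm2 : ∀ k, ‖(Φ x : ℂ) * B k + (g k : ℂ) * p x‖ ^ 2
        ≤ 2 * ‖B k‖ ^ 2 + 2 * g k ^ 2 * ‖p x‖ ^ 2 := by
      intro k
      have h := sq_norm_add_le ((Φ x : ℂ) * B k) ((g k : ℂ) * p x)
      have hb : ‖(Φ x : ℂ) * B k‖ ≤ ‖B k‖ := by
        rw [norm_mul]; exact mul_le_of_le_one_left (norm_nonneg _) hΦb
      have hgp : ‖(g k : ℂ) * p x‖ ^ 2 = g k ^ 2 * ‖p x‖ ^ 2 := by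
        rw [norm_mul, mul_pow, Complex.norm_real, Real.norm_eq_abs, sq_abs]
      nlinarith [norm_nonneg ((Φ x : ℂ) * B k), norm_nonneg (B k)]
    have hsum2 : ∑ k, ‖(Φ x : ℂ) * B k + (g k : ℂ) * p x‖ ^ 2
        ≤ 2 * (∑ k, ‖B k‖ ^ 2) + 2 * δ⁻¹ ^ 2 * ‖p x‖ ^ 2 := by
      calc ∑ k, ‖(Φ x : ℂ) * B k + (g k : ℂ) * p x‖ ^ 2
          ≤ ∑ k, (2 * ‖B k‖ ^ 2 + 2 * g k ^ 2 * ‖p x‖ ^ 2) :=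
            Finset.sum_le_sum fun k _ => hterm2 k
        _ = 2 * (∑ k, ‖B k‖ ^ 2) + 2 * (∑ k, g k ^ 2) * ‖p x‖ ^ 2 := by
            rw [Finset.sum_add_distrib, ← Finset.mul_sum]
            congr 1
            rw [Finset.mul_sum, Finset.sum_mul]
        _ ≤ 2 * (∑ k, ‖B k‖ ^ 2) + 2 * δ⁻¹ ^ 2 * ‖p x‖ ^ 2 := by
            nlinarith [sq_nonneg ‖p x‖]
    have hFle : F x ≤ 2 * ‖A‖ ^ 2 + 2 * (∑ k, ‖B k‖ ^ 2)
        + 2 * δ⁻¹ ^ 2 * (∑ k, ‖u x k‖ ^ 2) + 2 * δ⁻¹ ^ 2 * ‖p x‖ ^ 2 := by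
      rw [hF]
      simp only [hT1]
      have : ∑ k, ‖Complex.I * (ω : ℂ) * ((Φ x : ℂ) * u x k) +
          pderivC (fun y => (Φ y : ℂ) * p y) k x‖ ^ 2
          = ∑ k, ‖(Φ x : ℂ) * B k + (g k : ℂ) * p x‖ ^ 2 :=
        Finset.sum_congr rfl fun k _ => by rw [hT2 k]
      rw [this]
      linarith [hterm1, hsum2]
    have hδ2 : 2 / δ ^ 2 = 2 * δ⁻¹ ^ 2 := by field_simp
    rw [hG, hH, hδ2]
    simp only
    linarith [hFle]
  -- nonnegativity
  have hGnn : ∀ x, 0 ≤ G x := fun x =>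
    add_nonneg (sq_nonneg _) (Finset.sum_nonneg fun k _ => sq_nonneg _)
  have hHnn : ∀ x, 0 ≤ H x := fun x =>
    add_nonneg (Finset.sum_nonneg fun k _ => sq_nonneg _) (sq_nonneg _)
  have hc : (0:ℝ) ≤ 2 / δ ^ 2 := by positivity
  -- measurability
  have hpm : AEMeasurable p μ := (hp.continuousOn).aemeasurable hΩm
  have hum : ∀ k, AEMeasurable (fun x => u x k) μ := fun k =>
    ((hu k).continuousOn).aemeasurable hΩm
  have hdm : Measurable (divC u) := by
    unfold divC pderivC
    exact Finset.measurable_sum _ fun k _ => measurable_fderiv_apply_const ℝ _ _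
  have hpdm : ∀ k, Measurable (pderivC p k) := fun k =>
    measurable_fderiv_apply_const ℝ _ _
  have hGm : AEMeasurable (fun x => ENNReal.ofReal (G x)) μ := by
    refine AEMeasurable.ennreal_ofReal ?_
    refine AEMeasurable.add ?_ ?_
    · exact ((((aemeasurable_const.mul hpm).add hdm.aemeasurable)).norm.pow_const 2)
    · exact Finset.aemeasurable_fun_sum _ fun k _ =>
        (((aemeasurable_const.mul (hum k)).add (hpdm k).aemeasurable)).norm.pow_const 2
  have hHm : AEMeasurable (fun x => ENNReal.ofReal (H x)) μ := by
    refine AEMeasurable.ennreal_ofReal ?_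
    exact (Finset.aemeasurable_fun_sum _ fun k _ => (hum k).norm.pow_const 2).add
      (hpm.norm.pow_const 2)
  calc (∫⁻ x in Ω, ENNReal.ofReal (F x))
      ≤ ∫⁻ x, (2 * ENNReal.ofReal (G x)
          + ENNReal.ofReal (2 / δ ^ 2) * ENNReal.ofReal (H x)) ∂μ := by
        refine lintegral_mono_ae ((ae_restrict_iff' hΩm).2 (ae_of_all _ ?_))
        intro x hx
        calc ENNReal.ofReal (F x)
            ≤ ENNReal.ofReal (2 * G x + 2 / δ ^ 2 * H x) :=
              ENNReal.ofReal_le_ofReal (key x hx)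
          _ = 2 * ENNReal.ofReal (G x)
              + ENNReal.ofReal (2 / δ ^ 2) * ENNReal.ofReal (H x) := by
              rw [ENNReal.ofReal_add (by positivity) (by positivity),
                ENNReal.ofReal_mul (by norm_num : (0:ℝ) ≤ 2),
                ENNReal.ofReal_mul hc]
              norm_num
    _ = 2 * (∫⁻ x in Ω, ENNReal.ofReal (G x))
        + ENNReal.ofReal (2 / δ ^ 2) * (∫⁻ x in Ω, ENNReal.ofReal (H x)) := by
        rw [lintegral_add_left' (hGm.const_mul 2),
          lintegral_const_mul' _ _ (by norm_num : (2:ENNReal) ≠ ⊤),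
          lintegral_const_mul' _ _ ENNReal.ofReal_ne_top]
end

section
/- Let U be a complex vector space, V a complex Hilbert space, B : U → V* a linear map with b(u, v) := (B u)(v), R_V : V → V* the Riesz map, and l ∈ V*. Let U_h be a subspace of U. Then for u_h ∈ U_h and ψ ∈ V, the pair (u_h, ψ) satisfies the mixed system ⟪ψ, v⟫_V + b(u_h, v) = l(v) for all v ∈ V and b(w_h, ψ) = 0 for all w_h ∈ U_h, if and only if ψ = R_V^{-1}(l − B u_h) and ⟪R_V^{-1}(l − B u_h), R_V^{-1} B δu_h⟫_V = 0 for all δu_h ∈ U_h. -/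
/-- Equivalence of the mixed (saddle-point) formulation of the DPG method with
the normal-equations characterization: `(u_h, ψ)` solves
`⟪ψ, v⟫_V + b(u_h, v) = l(v)` for all `v ∈ V` and `b(w_h, ψ) = 0` for all
`w_h ∈ U_h` iff `ψ = R_V⁻¹(l − B u_h)` and
`⟪R_V⁻¹(l − B u_h), R_V⁻¹ B δu_h⟫_V = 0` for all `δu_h ∈ U_h`. -/
theorem stmt_12
    {U : Type*} [AddCommGroup U] [Module ℂ U]
    {V : Type*} [NormedAddCommGroup V] [InnerProductSpace ℂ V] [CompleteSpace V]
    (B : U →ₗ[ℂ] StrongDual ℂ V) (l : StrongDual ℂ V)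
    (Uh : Submodule ℂ U) (uh : U) (huh : uh ∈ Uh) (ψ : V) :
    ((∀ v : V, (inner ℂ ψ v : ℂ) + B uh v = l v) ∧ (∀ wh ∈ Uh, B wh ψ = 0)) ↔
      (ψ = (InnerProductSpace.toDual ℂ V).symm (l - B uh) ∧
        ∀ δuh ∈ Uh,
          (inner ℂ ((InnerProductSpace.toDual ℂ V).symm (l - B uh))
            ((InnerProductSpace.toDual ℂ V).symm (B δuh)) : ℂ) = 0) := by
  constructor
  · rintro ⟨h1, h2⟩
    have hψ : ψ = (InnerProductSpace.toDual ℂ V).symm (l - B uh) := by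
      apply ext_inner_right ℂ
      intro v
      rw [InnerProductSpace.toDual_symm_apply]
      have := h1 v
      simp only [ContinuousLinearMap.sub_apply]
      linear_combination this
    refine ⟨hψ, fun δuh hδ => ?_⟩
    rw [← hψ]
    have : (inner ℂ ((InnerProductSpace.toDual ℂ V).symm (B δuh)) ψ : ℂ) = 0 := by
      rw [InnerProductSpace.toDual_symm_apply]
      exact h2 δuh hδ
    rw [← inner_conj_symm, this, map_zero]
  · rintro ⟨hψ, h2⟩
    constructor
    · intro v
      rw [hψ, InnerProductSpace.toDual_symm_apply]
      simp only [ContinuousLinearMap.sub_apply]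
      ring
    · intro wh hw
      have := h2 wh hw
      rw [← hψ] at this
      have h3 : (inner ℂ ((InnerProductSpace.toDual ℂ V).symm (B wh)) ψ : ℂ) = 0 := by
        rw [← inner_conj_symm, this, map_zero]
      rw [InnerProductSpace.toDual_symm_apply] at h3
      exact h3
end
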